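/- Let λ > 0 and α ∈ (1/2, 1). Let e : [0, ∞) → ℝ be differentiable and satisfy e′(t) = −λ |e(t)|^α · sign(e(t)) for all t ≥ 0. Then e(t) = 0 for every t ≥ t_f, where t_f := λ⁻¹ (1 − α)⁻¹ |e(0)|^{1−α}. -/

import Mathlib

/-- Finite-time convergence of the terminal sliding mode dynamics
`ė = −λ |e|^α sign(e)`: the error is zero for every time past
`t_f = λ⁻¹ (1 − α)⁻¹ |e(0)|^{1−α}`. -/
theorem terminal_sliding_finite_time_convergence
    (lam α : ℝ) (hlam : 0 < lam) (hα : α ∈ Set.Ioo (1 / 2 : ℝ) 1)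
    (e : ℝ → ℝ)
    (hode : ∀ t : ℝ, 0 ≤ t →
      HasDerivAt e (-lam * |e t| ^ α * Real.sign (e t)) t) :
    ∀ t : ℝ, lam⁻¹ * (1 - α)⁻¹ * |e 0| ^ (1 - α) ≤ t → e t = 0 := by
  obtain ⟨hα1, hα2⟩ := hα
  have hβ : (0 : ℝ) < 1 - α := by linarith
  set β : ℝ := 1 - α with hβdef
  set c : ℝ := lam * β with hcdef
  have hcpos : 0 < c := mul_pos hlam hβ
  set g : ℝ → ℝ := fun s => |e s| ^ β with hgdef
  have hgnonneg : ∀ s, 0 ≤ g s := fun s => Real.rpow_nonneg (abs_nonneg _) _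
  -- continuity of g at nonnegative times
  have hgcont : ∀ r : ℝ, 0 ≤ r → ContinuousAt g r := by
    intro r hr
    have h1 : ContinuousAt (fun s => |e s|) r := ((hode r hr).continuousAt).abs
    exact h1.rpow_const (Or.inr hβ.le)
  -- derivative of g where e ≠ 0
  have hgderiv : ∀ r : ℝ, 0 ≤ r → e r ≠ 0 → HasDerivAt g (-c) r := by
    intro r hr hne
    have hd := hode r hr
    rcases hne.lt_or_gt with hneg | hpos
    · -- e r < 0
      have hev : ∀ᶠ s in nhds r, e s ∈ Set.Iio 0 :=
        (hd.continuousAt) (Iio_mem_nhds hneg)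
      have hx : (0 : ℝ) < -e r := by linarith
      have hd' : HasDerivAt (fun s => -e s) (-(-lam * |e r| ^ α * Real.sign (e r))) r :=
        hd.neg
      have hpow :
          HasDerivAt (fun s => (-e s) ^ β)
            (-(-lam * |e r| ^ α * Real.sign (e r)) * β * (-e r) ^ (β - 1)) r :=
        hd'.rpow_const (Or.inl (by positivity))
      have heq : g =ᶠ[nhds r] fun s => (-e s) ^ β := by
        filter_upwards [hev] with s hs
        have hs' : e s < 0 := hs
        show |e s| ^ β = (-e s) ^ β
        rw [abs_of_neg hs']
      have := hpow.congr_of_eventuallyEq heq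
      refine this.congr_deriv ?_
      have habs : |e r| = -e r := abs_of_neg hneg
      rw [Real.sign_of_neg hneg, habs]
      have hmul : (-e r) ^ α * (-e r) ^ (β - 1) = 1 := by
        rw [← Real.rpow_add hx, show α + (β - 1) = 0 by rw [hβdef]; ring, Real.rpow_zero]
      have : -c = -(lam * β) := rfl
      rw [this]
      nlinarith [hmul]
    · -- e r > 0
      have hev : ∀ᶠ s in nhds r, e s ∈ Set.Ioi 0 :=
        (hd.continuousAt) (Ioi_mem_nhds hpos)
      have hpow :
          HasDerivAt (fun s => (e s) ^ β)
            ((-lam * |e r| ^ α * Real.sign (e r)) * β * (e r) ^ (β - 1)) r :=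
        hd.rpow_const (Or.inl (ne_of_gt hpos))
      have heq : g =ᶠ[nhds r] fun s => (e s) ^ β := by
        filter_upwards [hev] with s hs
        have hs' : 0 < e s := hs
        show |e s| ^ β = (e s) ^ β
        rw [abs_of_pos hs']
      have := hpow.congr_of_eventuallyEq heq
      refine this.congr_deriv ?_
      have habs : |e r| = e r := abs_of_pos hpos
      rw [Real.sign_of_pos hpos, habs]
      have hmul : (e r) ^ α * (e r) ^ (β - 1) = 1 := by
        rw [← Real.rpow_add hpos, show α + (β - 1) = 0 by rw [hβdef]; ring, Real.rpow_zero]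
      have : -c = -(lam * β) := rfl
      rw [this]
      nlinarith [hmul]
  -- the function g + c • id is constant on intervals where e ≠ 0
  have hconst : ∀ a b : ℝ, 0 ≤ a → a < b → (∀ r, a ≤ r → r ≤ b → e r ≠ 0) →
      g b + c * b = g a + c * a := by
    intro a b ha hab hne
    have hcont : ContinuousOn (fun r => g r + c * r) (Set.Icc a b) := by
      intro x hx
      exact ((hgcont x (le_trans ha hx.1)).add (continuousAt_const.mul continuousAt_id)).continuousWithinAt
    have hderiv : ∀ x ∈ Set.Ico a b, HasDerivWithinAt (fun r => g r + c * r) 0 (Set.Ici x) x := by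
      intro x hx
      have h1 : HasDerivAt (fun r => g r + c * r) (-c + c * 1) x :=
        (hgderiv x (le_trans ha hx.1) (hne x hx.1 hx.2.le)).add
          ((hasDerivAt_id x).const_mul c)
      have h2 : HasDerivAt (fun r => g r + c * r) 0 x := by
        convert h1 using 1; ring
      exact h2.hasDerivWithinAt
    have := constant_of_has_deriv_right_zero hcont hderiv b (Set.right_mem_Icc.2 hab.le)
    simpa using this
  -- once zero, always zero
  have key : ∀ t0 : ℝ, 0 ≤ t0 → e t0 = 0 → ∀ t1 : ℝ, t0 ≤ t1 → e t1 = 0 := by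
    intro t0 ht0 h0 t1 ht1
    by_contra hne
    have ht01 : t0 < t1 := lt_of_le_of_ne ht1 (fun h => hne (h ▸ h0))
    set S : Set ℝ := Set.Icc t0 t1 ∩ e ⁻¹' {0} with hSdef
    have hSne : S.Nonempty := ⟨t0, ⟨le_rfl, ht01.le⟩, h0⟩
    have hSbdd : BddAbove S := ⟨t1, fun r hr => hr.1.2⟩
    have heOn : ContinuousOn e (Set.Icc t0 t1) := fun x hx =>
      ((hode x (le_trans ht0 hx.1)).continuousAt).continuousWithinAt
    have hSclosed : IsClosed S :=
      heOn.preimage_isClosed_of_isClosed isClosed_Icc isClosed_singleton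
    set s : ℝ := sSup S with hsdef
    have hsS : s ∈ S := hSclosed.csSup_mem hSne hSbdd
    have hst0 : t0 ≤ s := hsS.1.1
    have hst1 : s ≤ t1 := hsS.1.2
    have hes : e s = 0 := hsS.2
    have hs0 : 0 ≤ s := le_trans ht0 hst0
    have hslt : s < t1 := lt_of_le_of_ne hst1 (fun h => hne (h ▸ hes))
    have hne' : ∀ r, s < r → r ≤ t1 → e r ≠ 0 := by
      intro r hsr hrt1 hr0
      have : r ∈ S := ⟨⟨le_trans hst0 hsr.le, hrt1⟩, hr0⟩
      exact absurd (le_csSup hSbdd this) (not_le.2 hsr)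
    set m : ℝ := (s + t1) / 2 with hmdef
    have hsm : s < m := by rw [hmdef]; linarith
    have hmt1 : m < t1 := by rw [hmdef]; linarith
    -- g u ≥ c * (t1 - m) for u ∈ (s, m)
    have hlb : ∀ u, u ∈ Set.Ioo s m → c * (t1 - m) ≤ g u := by
      intro u hu
      have hu0 : 0 ≤ u := le_trans hs0 hu.1.le
      have hut1 : u < t1 := lt_trans hu.2 hmt1
      have := hconst u t1 hu0 hut1 (fun r hr1 hr2 => hne' r (lt_of_lt_of_le hu.1 hr1) hr2)
      have hgt1 : 0 ≤ g t1 := hgnonneg t1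
      nlinarith [hcpos, hu.2, hmt1]
    -- take the limit u → s⁺
    have hgs : g s = 0 := by
      simp only [hgdef, hes, abs_zero]
      exact Real.zero_rpow hβ.ne'
    have htend : Filter.Tendsto g (nhdsWithin s (Set.Ioi s)) (nhds 0) := by
      have := (hgcont s hs0).continuousWithinAt (s := Set.Ioi s)
      rwa [ContinuousWithinAt, hgs] at this
    have hevlb : ∀ᶠ u in nhdsWithin s (Set.Ioi s), c * (t1 - m) ≤ g u := by
      filter_upwards [Ioo_mem_nhdsGT hsm] with u hu
      exact hlb u hu
    have hfin : c * (t1 - m) ≤ 0 := ge_of_tendsto htend hevlb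
    nlinarith [hcpos, hmt1]
  -- main argument
  intro t ht
  have htf0 : 0 ≤ lam⁻¹ * β⁻¹ * |e 0| ^ β := by positivity
  have ht0 : 0 ≤ t := le_trans htf0 ht
  by_cases hz : ∃ r, 0 ≤ r ∧ r ≤ t ∧ e r = 0
  · obtain ⟨r, hr0, hrt, hre⟩ := hz
    exact key r hr0 hre t hrt
  · exfalso
    push_neg at hz
    have hne : ∀ r, 0 ≤ r → r ≤ t → e r ≠ 0 := hz
    have he0 : e 0 ≠ 0 := hne 0 le_rfl ht0
    have hg0pos : 0 < g 0 := Real.rpow_pos_of_pos (abs_pos.2 he0) β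
    have htfpos : 0 < lam⁻¹ * β⁻¹ * |e 0| ^ β := by
      have : (0:ℝ) < |e 0| ^ β := Real.rpow_pos_of_pos (abs_pos.2 he0) β
      positivity
    have htpos : 0 < t := lt_of_lt_of_le htfpos ht
    have hconst0 := hconst 0 t le_rfl htpos hne
    have hctf : c * (lam⁻¹ * β⁻¹ * |e 0| ^ β) = g 0 := by
      rw [hcdef, hgdef]
      field_simp
    have hgt : 0 < g t := Real.rpow_pos_of_pos (abs_pos.2 (hne t ht0 le_rfl)) β
    nlinarith [mul_le_mul_of_nonneg_left ht hcpos.le]
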